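/- Let r, s be nonnegative integers with r + s ≥ 1. Define coefficients α_j for −r ≤ j ≤ s by α_j = ((−1)^{j+1}/j) · r! s! / ((r+j)! (s−j)!) for j ≠ 0, and α₀ = −∑_{j=−r, j≠0}^{s} α_j. Then for every polynomial P of degree at most r + s, ∑_{j=−r}^{s} α_j P(j) = P'(0); i.e., the finite-difference operator with these coefficients approximates the first derivative exactly on polynomials of degree up to r + s (it is of order q = r + s). -/

import Mathlib

open Finset Polynomial


-- reindex lemma
lemma reidx (f : ℤ → ℝ) (c a b : ℤ) :
    ∏ m ∈ Finset.Icc a b, f (c - m) = ∏ t ∈ Finset.Icc (c - b) (c - a), f t := by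
  have him : Finset.Icc (c-b) (c-a) = (Finset.Icc a b).image (fun m => c - m) := by
    ext x
    simp only [Finset.mem_image, Finset.mem_Icc]
    constructor
    · intro hx; exact ⟨c - x, by omega, by omega⟩
    · rintro ⟨m, hm, rfl⟩; omega
  rw [him, Finset.prod_image (by intro x _ y _ h; have h' : c - x = c - y := h; omega)]

lemma prodIcc (n : ℕ) : ∏ t ∈ Finset.Icc (1:ℤ) (n:ℤ), (t:ℝ) = n.factorial := by
  induction n with
  | zero => simp
  | succ n ih =>
    have : Finset.Icc (1:ℤ) ((n+1 : ℕ):ℤ) = insert ((n:ℤ)+1) (Finset.Icc (1:ℤ) (n:ℤ)) := by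
      ext x; simp; omega
    rw [this, Finset.prod_insert (by simp), ih]
    push_cast [Nat.factorial_succ]; ring

lemma prodIccNeg (n : ℕ) : ∏ t ∈ Finset.Icc (1:ℤ) (n:ℤ), (-(t:ℝ)) = (-1)^n * n.factorial := by
  simp only [show ∀ t : ℤ, (-(t:ℝ)) = (-1) * (t:ℝ) from fun t => by ring]
  rw [Finset.prod_mul_distrib, Finset.prod_const, prodIcc, Int.card_Icc]
  norm_num

lemma castIcc (n : ℕ) (m : ℤ) (h : 0 ≤ m) (hm : m.toNat = n) :
    Finset.Icc (1:ℤ) m = Finset.Icc (1:ℤ) (n:ℤ) := by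
  congr 1; omega

lemma lemA (r s : ℕ) (j : ℤ) (h1 : -(r:ℤ) ≤ j) (h2 : j ≤ (s:ℤ)) :
    ∏ m ∈ (Finset.Icc (-(r:ℤ)) (s:ℤ)).erase j, ((j:ℝ) - (m:ℝ)) =
      (((r:ℤ)+j).toNat.factorial : ℝ) * (-1)^(((s:ℤ)-j).toNat) *
        (((s:ℤ)-j).toNat.factorial : ℝ) := by
  have hsplit : (Finset.Icc (-(r:ℤ)) (s:ℤ)).erase j =
      Finset.Icc (-(r:ℤ)) (j-1) ∪ Finset.Icc (j+1) (s:ℤ) := by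
    ext x; simp only [Finset.mem_erase, Finset.mem_Icc, Finset.mem_union]; omega
  have hdisj : Disjoint (Finset.Icc (-(r:ℤ)) (j-1)) (Finset.Icc (j+1) (s:ℤ)) := by
    rw [Finset.disjoint_left]; intro x hx hy
    simp only [Finset.mem_Icc] at hx hy; omega
  rw [hsplit, Finset.prod_union hdisj]
  have e1 : ∏ m ∈ Finset.Icc (-(r:ℤ)) (j-1), ((j:ℝ) - (m:ℝ)) =
      (((r:ℤ)+j).toNat.factorial : ℝ) := by
    calc ∏ m ∈ Finset.Icc (-(r:ℤ)) (j-1), ((j:ℝ) - (m:ℝ))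
        = ∏ m ∈ Finset.Icc (-(r:ℤ)) (j-1), ((fun t : ℤ => (t:ℝ)) (j - m)) := by
          apply Finset.prod_congr rfl; intro m _; push_cast; ring
      _ = ∏ t ∈ Finset.Icc (j-(j-1)) (j - -(r:ℤ)), (t:ℝ) := reidx _ _ _ _
      _ = ∏ t ∈ Finset.Icc (1:ℤ) ((((r:ℤ)+j).toNat : ℕ) : ℤ), (t:ℝ) := by
          rw [show j-(j-1) = (1:ℤ) by ring]
          rw [castIcc (((r:ℤ)+j).toNat) (j - -(r:ℤ)) (by omega) (by omega)]
      _ = _ := prodIcc _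
  have e2 : ∏ m ∈ Finset.Icc (j+1) (s:ℤ), ((j:ℝ) - (m:ℝ)) =
      (-1)^(((s:ℤ)-j).toNat) * (((s:ℤ)-j).toNat.factorial : ℝ) := by
    calc ∏ m ∈ Finset.Icc (j+1) (s:ℤ), ((j:ℝ) - (m:ℝ))
        = ∏ m ∈ Finset.Icc (j+1) (s:ℤ), ((fun t : ℤ => (t:ℝ)) (j - m)) := by
          apply Finset.prod_congr rfl; intro m _; push_cast; ring
      _ = ∏ t ∈ Finset.Icc (j-(s:ℤ)) (j-(j+1)), (t:ℝ) := reidx _ _ _ _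
      _ = ∏ m ∈ Finset.Icc (1:ℤ) (((((s:ℤ)-j).toNat : ℕ)):ℤ), (-(m:ℝ)) := by
          have e2' : ∏ m ∈ Finset.Icc (1:ℤ) (((((s:ℤ)-j).toNat : ℕ)):ℤ), (-(m:ℝ)) =
              ∏ t ∈ Finset.Icc (j-(s:ℤ)) (j-(j+1)), (t:ℝ) := by
            calc ∏ m ∈ Finset.Icc (1:ℤ) (((((s:ℤ)-j).toNat : ℕ)):ℤ), (-(m:ℝ))
                = ∏ m ∈ Finset.Icc (1:ℤ) (((((s:ℤ)-j).toNat : ℕ)):ℤ),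
                    ((fun t : ℤ => (t:ℝ)) (0 - m)) := by
                  apply Finset.prod_congr rfl; intro m _; push_cast; ring
              _ = ∏ t ∈ Finset.Icc (0 - (((((s:ℤ)-j).toNat : ℕ)):ℤ)) (0 - 1), (t:ℝ) :=
                  reidx _ _ _ _
              _ = ∏ t ∈ Finset.Icc (j-(s:ℤ)) (j-(j+1)), (t:ℝ) := by
                  rw [show (0 - (((((s:ℤ)-j).toNat : ℕ)):ℤ)) = j - (s:ℤ) by omega,
                    show (0-1 : ℤ) = j - (j+1) by ring]
          exact e2'.symm
      _ = _ := prodIccNeg _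
  rw [e1, e2]; ring

lemma lemB (r s : ℕ) :
    ∏ m ∈ (Finset.Icc (-(r:ℤ)) (s:ℤ)).erase 0, (-(m:ℝ)) =
      (r.factorial : ℝ) * (-1)^s * (s.factorial : ℝ) := by
  have hsplit : (Finset.Icc (-(r:ℤ)) (s:ℤ)).erase 0 =
      Finset.Icc (-(r:ℤ)) (-1) ∪ Finset.Icc (1:ℤ) (s:ℤ) := by
    ext x; simp only [Finset.mem_erase, Finset.mem_Icc, Finset.mem_union]; omega
  have hdisj : Disjoint (Finset.Icc (-(r:ℤ)) (-1:ℤ)) (Finset.Icc (1:ℤ) (s:ℤ)) := by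
    rw [Finset.disjoint_left]; intro x hx hy
    simp only [Finset.mem_Icc] at hx hy; omega
  rw [hsplit, Finset.prod_union hdisj]
  have e1 : ∏ m ∈ Finset.Icc (-(r:ℤ)) (-1:ℤ), (-(m:ℝ)) = (r.factorial : ℝ) := by
    calc ∏ m ∈ Finset.Icc (-(r:ℤ)) (-1:ℤ), (-(m:ℝ))
        = ∏ m ∈ Finset.Icc (-(r:ℤ)) (-1:ℤ), ((fun t : ℤ => (t:ℝ)) (0 - m)) := by
          apply Finset.prod_congr rfl; intro m _; push_cast; ring
      _ = ∏ t ∈ Finset.Icc (0-(-1:ℤ)) (0 - -(r:ℤ)), (t:ℝ) := reidx _ _ _ _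
      _ = ∏ t ∈ Finset.Icc (1:ℤ) ((r:ℕ):ℤ), (t:ℝ) := by
          rw [show (0-(-1:ℤ)) = 1 by ring, show (0 - -(r:ℤ)) = ((r:ℕ):ℤ) by omega]
      _ = _ := prodIcc _
  have e2 : ∏ m ∈ Finset.Icc (1:ℤ) (s:ℤ), (-(m:ℝ)) = (-1)^s * (s.factorial : ℝ) :=
    prodIccNeg s
  rw [e1, e2]; ring

lemma derivFinsetProd {ι : Type*} [DecidableEq ι] (s : Finset ι) (f : ι → Polynomial ℝ) :
    Polynomial.derivative (∏ i ∈ s, f i) =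
      ∑ i ∈ s, (∏ j ∈ s.erase i, f j) * Polynomial.derivative (f i) := by
  induction s using Finset.induction with
  | empty => simp
  | @insert a t ha ih =>
    rw [Finset.prod_insert ha, Polynomial.derivative_mul, Finset.sum_insert ha,
      Finset.erase_insert ha, ih, Finset.mul_sum]
    rw [mul_comm (Polynomial.derivative (f a)) (∏ i ∈ t, f i)]
    congr 1
    apply Finset.sum_congr rfl
    intro i hi
    rw [Finset.erase_insert_of_ne (by rintro rfl; exact ha hi)]
    rw [Finset.prod_insert (fun hmem => ha (Finset.mem_of_mem_erase hmem))]
    ring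

lemma betaEq (r s : ℕ) (j : ℤ) (hj : j ∈ Finset.Icc (-(r:ℤ)) (s:ℤ)) (hj0 : j ≠ 0) :
    (Polynomial.derivative
      (Lagrange.basis (Finset.Icc (-(r:ℤ)) (s:ℤ)) (fun n : ℤ => (n:ℝ)) j)).eval 0 =
    (j:ℝ)⁻¹ * ∏ m ∈ ((Finset.Icc (-(r:ℤ)) (s:ℤ)).erase j).erase 0,
      (((j:ℝ) - m)⁻¹ * (0 - m)) := by
  have h0 : (0:ℤ) ∈ (Finset.Icc (-(r:ℤ)) (s:ℤ)).erase j := by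
    simp only [Finset.mem_erase, Finset.mem_Icc]
    refine ⟨Ne.symm hj0, by omega, by omega⟩
  rw [Lagrange.basis, derivFinsetProd, Polynomial.eval_finset_sum]
  rw [Finset.sum_eq_single_of_mem 0 h0 ?_]
  · rw [Polynomial.eval_mul, Polynomial.eval_prod]
    simp only [Lagrange.basisDivisor, Polynomial.derivative_mul, Polynomial.derivative_C,
      Polynomial.derivative_sub, Polynomial.derivative_X, Polynomial.eval_add,
      Polynomial.eval_mul, Polynomial.eval_C, Polynomial.eval_sub, Polynomial.eval_X,
      zero_mul, mul_one, sub_zero, Int.cast_zero, zero_add]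
    ring_nf
  · intro b hb hb0
    rw [Polynomial.eval_mul, Polynomial.eval_prod]
    have h0' : (0:ℤ) ∈ ((Finset.Icc (-(r:ℤ)) (s:ℤ)).erase j).erase b := by
      simp only [Finset.mem_erase, Finset.mem_Icc]
      exact ⟨Ne.symm hb0, Ne.symm hj0, by omega, by omega⟩
    rw [Finset.prod_eq_zero h0' (by
      simp [Lagrange.basisDivisor])]
    ring

lemma alphaBetaVal (r s : ℕ) (j : ℤ) (hj : j ∈ Finset.Icc (-(r:ℤ)) (s:ℤ)) (hj0 : j ≠ 0) :
    (Polynomial.derivative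
      (Lagrange.basis (Finset.Icc (-(r:ℤ)) (s:ℤ)) (fun n : ℤ => (n:ℝ)) j)).eval 0 =
    ((-1 : ℝ) ^ (j + 1) / (j : ℝ)) * ((r.factorial : ℝ) * (s.factorial : ℝ)) /
      (((((r : ℤ) + j).toNat.factorial : ℝ)) * ((((s : ℤ) - j).toNat.factorial : ℝ))) := by
  obtain ⟨h1, h2⟩ := Finset.mem_Icc.mp hj
  rw [betaEq r s j hj hj0]
  set S := Finset.Icc (-(r:ℤ)) (s:ℤ) with hS
  have h0Sj : (0:ℤ) ∈ S.erase j := by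
    simp only [hS, Finset.mem_erase, Finset.mem_Icc]; exact ⟨Ne.symm hj0, by omega, by omega⟩
  have hj0S : j ∈ S.erase 0 := by
    simp only [hS, Finset.mem_erase, Finset.mem_Icc]; exact ⟨hj0, by omega, by omega⟩
  have hcomm : (S.erase j).erase 0 = (S.erase 0).erase j := by
    ext x; simp only [Finset.mem_erase]; tauto
  have hsplit : ∏ m ∈ (S.erase j).erase 0, (((j:ℝ) - m)⁻¹ * (0 - m)) =
      (∏ m ∈ (S.erase j).erase 0, ((j:ℝ) - m))⁻¹ *
        ∏ m ∈ (S.erase j).erase 0, (-(m:ℝ)) := by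
    rw [Finset.prod_mul_distrib, ← Finset.prod_inv_distrib]
    congr 1
    apply Finset.prod_congr rfl; intro m _; ring
  have hD := Finset.prod_erase_mul (S.erase j) (fun m => ((j:ℝ) - (m:ℝ))) h0Sj
  have hN := Finset.prod_erase_mul (S.erase 0) (fun m => (-(m:ℝ))) hj0S
  have hDA := lemA r s j h1 h2
  have hNB := lemB r s
  rw [← hS] at hDA hNB
  have hjR : (j:ℝ) ≠ 0 := Int.cast_ne_zero.mpr hj0
  -- express the two products
  have hD' : ∏ m ∈ (S.erase j).erase 0, ((j:ℝ) - m) =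
      ((((r:ℤ)+j).toNat.factorial : ℝ) * (-1)^(((s:ℤ)-j).toNat) *
        (((s:ℤ)-j).toNat.factorial : ℝ)) / (j:ℝ) := by
    rw [eq_div_iff hjR]
    rw [← hDA, ← hD]
    push_cast
    ring
  have hN' : ∏ m ∈ (S.erase j).erase 0, (-(m:ℝ)) =
      ((r.factorial : ℝ) * (-1)^s * (s.factorial : ℝ)) / (-(j:ℝ)) := by
    rw [eq_div_iff (by simpa using hjR), hcomm, ← hNB, ← hN]
  rw [hsplit, hD', hN']
  -- sign bookkeeping
  have hne : (-1:ℝ) ≠ 0 := by norm_num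
  have hsq : ((-1:ℝ))^(((s:ℤ)-j).toNat) * ((-1:ℝ))^(((s:ℤ)-j).toNat) = 1 := by
    rw [← pow_add]; exact Even.neg_one_pow ⟨_, rfl⟩
  have hsign : ((-1:ℝ))^(((s:ℤ)-j).toNat) * (-1:ℝ)^(j+1) = -((-1:ℝ))^s := by
    have e1 : ((-1:ℝ))^(((s:ℤ)-j).toNat) = (-1:ℝ)^((s:ℤ)-j) := by
      rw [← zpow_natCast, Int.toNat_of_nonneg (by omega)]
    rw [e1, ← zpow_add₀ hne, show (s:ℤ) - j + (j+1) = ((s+1 : ℕ) : ℤ) by push_cast; ring,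
      zpow_natCast, pow_succ]
    ring
  have hsign2 : (-1:ℝ)^(j+1) =
      -((-1:ℝ))^s * ((-1:ℝ))^(((s:ℤ)-j).toNat) := by
    calc (-1:ℝ)^(j+1) = (((-1:ℝ))^(((s:ℤ)-j).toNat) * ((-1:ℝ))^(((s:ℤ)-j).toNat)) *
          (-1:ℝ)^(j+1) := by rw [hsq, one_mul]
      _ = ((-1:ℝ))^(((s:ℤ)-j).toNat) * (((-1:ℝ))^(((s:ℤ)-j).toNat) * (-1:ℝ)^(j+1)) := by
          ring
      _ = -((-1:ℝ))^s * ((-1:ℝ))^(((s:ℤ)-j).toNat) := by rw [hsign]; ring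
  rw [hsign2]
  have hF1 : ((((r:ℤ)+j).toNat.factorial : ℝ)) ≠ 0 := by positivity
  have hF2 : ((((s:ℤ)-j).toNat.factorial : ℝ)) ≠ 0 := by positivity
  have hR : (r.factorial : ℝ) ≠ 0 := by positivity
  have hSs : (s.factorial : ℝ) ≠ 0 := by positivity
  have hE : ((-1:ℝ))^(((s:ℤ)-j).toNat) ≠ 0 := pow_ne_zero _ hne
  field_simp
  linear_combination hsq





/-- The Iserles finite-difference coefficients
`α_j = ((-1)^{j+1}/j) r! s! / ((r+j)! (s-j)!)` for `j ≠ 0`,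
`α₀ = -∑_{j≠0} α_j`, reproduce the first derivative exactly on polynomials
of degree at most `r + s`: `∑_{j=-r}^{s} α_j P(j) = P'(0)`. -/
theorem stmt_11 (r s : ℕ) (hrs : 1 ≤ r + s) (α : ℤ → ℝ)
    (hα : ∀ j ∈ Finset.Icc (-(r : ℤ)) (s : ℤ), j ≠ 0 →
      α j = ((-1 : ℝ) ^ (j + 1) / (j : ℝ)) *
        ((r.factorial : ℝ) * (s.factorial : ℝ)) /
          (((((r : ℤ) + j).toNat.factorial : ℝ)) * ((((s : ℤ) - j).toNat.factorial : ℝ))))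
    (hα₀ : α 0 = -∑ j ∈ (Finset.Icc (-(r : ℤ)) (s : ℤ)).erase 0, α j) :
    ∀ P : Polynomial ℝ, P.natDegree ≤ r + s →
      ∑ j ∈ Finset.Icc (-(r : ℤ)) (s : ℤ), α j * P.eval (j : ℝ) =
        (Polynomial.derivative P).eval 0 := by
  intro P hP
  set v : ℤ → ℝ := fun n => (n:ℝ) with hv
  set S := Finset.Icc (-(r:ℤ)) (s:ℤ) with hS
  have hinj : Set.InjOn v ↑S := fun a _ b _ h => Int.cast_injective h
  have h0S : (0:ℤ) ∈ S := by simp only [hS, Finset.mem_Icc]; omega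
  have hcard : S.card = r + s + 1 := by rw [hS, Int.card_Icc]; omega
  have hβsum : ∑ i ∈ S, (Polynomial.derivative (Lagrange.basis S v i)).eval 0 = 0 := by
    have h1 : ∑ i ∈ S, Lagrange.basis S v i = 1 := Lagrange.sum_basis hinj ⟨0, h0S⟩
    have h2 := congrArg (fun q => (Polynomial.derivative q).eval 0) h1
    rw [map_sum, Polynomial.eval_finset_sum] at h2
    simpa using h2
  have h4 : ∑ i ∈ S.erase 0,
      (Polynomial.derivative (Lagrange.basis S v i)).eval 0 = ∑ i ∈ S.erase 0, α i := by
    apply Finset.sum_congr rfl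
    intro i hi
    have hiS : i ∈ S := Finset.mem_of_mem_erase hi
    have hi0 : i ≠ 0 := (Finset.mem_erase.mp hi).1
    rw [alphaBetaVal r s i hiS hi0, hα i hiS hi0]
  have hβ0 : (Polynomial.derivative (Lagrange.basis S v 0)).eval 0 = α 0 := by
    have h3 := Finset.sum_erase_add S
      (fun i => (Polynomial.derivative (Lagrange.basis S v i)).eval 0) h0S
    rw [hβsum] at h3
    rw [hα₀, ← h4]
    linarith
  have hβα : ∀ i ∈ S, (Polynomial.derivative (Lagrange.basis S v i)).eval 0 = α i := by
    intro i hi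
    by_cases hi0 : i = 0
    · subst hi0; exact hβ0
    · rw [alphaBetaVal r s i hi hi0, hα i hi hi0]
  have hdeg : P.degree < (S.card : ℕ) := by
    rw [hcard]
    exact lt_of_le_of_lt Polynomial.degree_le_natDegree
      (by exact_mod_cast Nat.lt_succ_of_le hP)
  have hrepr := Lagrange.eq_interpolate hinj hdeg
  calc ∑ j ∈ S, α j * P.eval (j:ℝ)
      = ∑ j ∈ S, P.eval (v j) * (Polynomial.derivative (Lagrange.basis S v j)).eval 0 := by
        apply Finset.sum_congr rfl; intro i hi; rw [hβα i hi]; ring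
    _ = (Polynomial.derivative P).eval 0 := by
        conv_rhs => rw [hrepr]
        rw [Lagrange.interpolate_apply, map_sum, Polynomial.eval_finset_sum]
        apply Finset.sum_congr rfl
        intro i hi
        rw [Polynomial.derivative_mul, Polynomial.derivative_C]
        simp
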